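/- Suppose real numbers y_l and y′_l satisfy y_l = −(1/d)·(c/r − w_l) and σ²w_l²·(y′_l − 1) = −2λ·y_l² + 2(μw_l − c)·y_l. Then y′_l = 1 + (r+m)/λ − (r/λ)·d, and moreover y′_l < (μ+r)/(2λ). -/

import Mathlib

set_option maxRecDepth 40000
set_option maxHeartbeats 1000000

theorem stmt_5 (r mu sigma lam c m d x wl : ℝ)
    (hr : 0 < r) (hmu : r < mu) (hs : 0 < sigma) (hlam : 0 < lam) (hc : 0 < c)
    (hm : m = (mu - r)^2 / (2 * sigma^2))
    (hd : d = ((r + lam + m) + Real.sqrt ((r + lam + m)^2 - 4*r*lam)) / (2*r))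
    (hx : x = (mu - r) / (sigma^2 * (d - 1)))
    (hwl : wl = (x / (1 + x)) * (c / r))
    (yl yl' : ℝ)
    (hyl : yl = -(1/d) * (c/r - wl))
    (hode : sigma^2 * wl^2 * (yl' - 1) = -2 * lam * yl^2 + 2 * (mu * wl - c) * yl) :
    yl' = 1 + (r + m) / lam - (r / lam) * d ∧ yl' < (mu + r) / (2 * lam) := by
  have hk : 0 < mu - r := by linarith
  have hS : (0:ℝ) < sigma^2 := by positivity
  have hm0 : 0 < m := by rw [hm]; positivity
  have hdisc : 0 < (r + lam + m)^2 - 4*r*lam := by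
    nlinarith [sq_nonneg (r - lam), sq_nonneg m, mul_pos hm0 (add_pos hr hlam)]
  have hsq : Real.sqrt ((r + lam + m)^2 - 4*r*lam) ^ 2 = (r + lam + m)^2 - 4*r*lam :=
    Real.sq_sqrt hdisc.le
  have hsd : 2*r*d = (r + lam + m) + Real.sqrt ((r + lam + m)^2 - 4*r*lam) := by
    rw [hd]; field_simp
  have h2 : (2*r*d - (r + lam + m))^2 = (r + lam + m)^2 - 4*r*lam := by
    rw [show 2*r*d - (r + lam + m) = Real.sqrt ((r + lam + m)^2 - 4*r*lam) from by linarith]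
    exact hsq
  have hquad : r*d^2 - (r + lam + m)*d + lam = 0 := by
    have h3 : 4*r*(r*d^2 - (r + lam + m)*d + lam) = 0 := by linear_combination h2
    exact (mul_eq_zero.mp h3).resolve_left (by positivity)
  have hd1 : 1 < d := by
    have hs' : 2*r - (r + lam + m) < Real.sqrt ((r + lam + m)^2 - 4*r*lam) := by
      rcases le_or_gt (2*r - (r + lam + m)) 0 with h | h
      · exact h.trans_lt (Real.sqrt_pos.mpr hdisc)
      · refine (Real.lt_sqrt h.le).mpr ?_
        have key : (2*r - (r + lam + m))^2 = (r + lam + m)^2 - 4*r*lam - 4*(r*m) := by ring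
        linarith [key, mul_pos hr hm0]
    have h2rd : (2*r)*1 < (2*r)*d := by linarith
    exact lt_of_mul_lt_mul_left h2rd (by positivity)
  have hd0 : (0:ℝ) < d := by linarith
  have hsd0 : (0:ℝ) < sigma^2*(d-1) := mul_pos hS (by linarith)
  have hD : (0:ℝ) < sigma^2*(d-1) + (mu - r) := by linarith
  have hwv : wl = (mu - r)*c/(r*(sigma^2*(d-1) + (mu - r))) := by
    have hne : 1 + (mu - r) / (sigma ^ 2 * (d - 1)) ≠ 0 := by positivity
    have hd1' : d - 1 ≠ 0 := by linarith
    rw [hwl, hx]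
    field_simp
  have hyv : yl = -(c*sigma^2*(d-1))/(r*d*(sigma^2*(d-1) + (mu - r))) := by
    rw [hyl, hwv]
    field_simp
    ring
  have h2m : 2*sigma^2*m = (mu - r)^2 := by rw [hm]; field_simp
  have hquad2 : 2*sigma^2*r*d^2 - (2*sigma^2*(r+lam) + (mu - r)^2)*d + 2*sigma^2*lam = 0 := by
    linear_combination 2*sigma^2*hquad + d*h2m
  have hodeP : (mu - r)^2*d^2*(yl' - 1)
      = -2*lam*sigma^2*(d-1)^2 - 2*d*(d-1)*((mu - r)^2 - r*sigma^2*(d-1)) := by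
    rw [hwv, hyv] at hode
    field_simp at hode
    have h5 : c^2*sigma^2*r^4*d*(sigma^2*(d-1)+(mu - r))^4 *
        ((mu - r)^2*d^2*(yl' - 1) - (-2*lam*sigma^2*(d-1)^2 - 2*d*(d-1)*((mu - r)^2 - r*sigma^2*(d-1)))) = 0 := by
      linear_combination (c^2*sigma^2*r^4*d*(sigma^2*(d-1)+(mu - r))^4) * hode
    have h6 := (mul_eq_zero.mp h5).resolve_left (by positivity)
    linarith [h6]
  have h0 : (mu - r)^2*d^2*yl' - (mu - r)^2*d = 0 := by
    linear_combination hodeP + (d-1)*hquad2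
  have hy1d : yl' = 1/d := by
    have hkk : ((mu - r)^2*d) * (d*yl' - 1) = 0 := by linear_combination h0
    have := (mul_eq_zero.mp hkk).resolve_left (by positivity)
    field_simp
    linarith [this]
  constructor
  · rw [hy1d]
    field_simp
    linear_combination hquad
  · rw [hy1d]
    have hbr : 0 < (mu - r) + 2*r*d - 2*m - 2*lam := by
      have hkey : (d-1)*(2*lam + 2*m - 2*r*d - (mu - r)) = -((mu - r)*(d-1) + 2*m) := by
        linear_combination (-2)*hquad
      nlinarith [hkey, mul_pos hk (by linarith : (0:ℝ) < d - 1), hm0]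
    rw [div_lt_div_iff₀ hd0 (by positivity)]
    nlinarith [hquad, mul_pos hd0 hbr]
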